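/- Let g(L) be a polynomial in a symmetric matrix L = U Λ Uᵀ with U orthogonal. Suppose I ⊆ {1,...,n} indexes a maximal linearly independent set of rows of X̃ = Uᵀ X (so every row of X̃ is a linear combination of rows indexed by I). If Z = g(L) X W, Z̃ = Uᵀ Z, and all diagonal entries of g(Λ) restricted to I are nonzero and all rows Z̃_i for i ∈ I are equal as vectors with all coordinates equal and nonzero, then all columns of Z̃ are equal. -/
import Mathlib

open Matrix

lemma aeval_conj_diag {n : ℕ} (U : Matrix (Fin n) (Fin n) ℝ) (lam : Fin n → ℝ)
    (hU : U * Uᵀ = 1) (g : Polynomial ℝ) :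
    Polynomial.aeval (U * Matrix.diagonal lam * Uᵀ) g
      = U * Matrix.diagonal (fun i => g.eval (lam i)) * Uᵀ := by
  have hU' : Uᵀ * U = 1 := mul_eq_one_comm.mp hU
  induction g using Polynomial.induction_on' with
  | add p q hp hq =>
      rw [map_add, hp, hq, ← Matrix.add_mul, ← Matrix.mul_add]
      have : ((Matrix.diagonal fun i => Polynomial.eval (lam i) p)
            + Matrix.diagonal fun i => Polynomial.eval (lam i) q)
          = Matrix.diagonal fun i => Polynomial.eval (lam i) (p + q) := by
        ext i j
        by_cases h : i = j <;> simp [Matrix.diagonal_apply, h]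
      rw [this]
  | monomial m a =>
      have key : ∀ A B : Matrix (Fin n) (Fin n) ℝ,
          (U * A * Uᵀ) * (U * B * Uᵀ) = U * (A * B) * Uᵀ := by
        intro A B
        simp only [Matrix.mul_assoc]
        rw [← Matrix.mul_assoc Uᵀ U, hU', Matrix.one_mul]
      have hpow : (U * Matrix.diagonal lam * Uᵀ) ^ m
          = U * Matrix.diagonal (fun i => lam i ^ m) * Uᵀ := by
        induction m with
        | zero => simpa using hU.symm
        | succ m ih =>
            rw [pow_succ, ih, key, Matrix.diagonal_mul_diagonal]
            have : (fun i => lam i ^ m * lam i) = fun i => lam i ^ (m + 1) := by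
              ext i; rw [pow_succ]
            rw [this]
      rw [Polynomial.aeval_monomial, hpow, ← Algebra.smul_def]
      have h1 : (fun i => Polynomial.eval (lam i) (Polynomial.monomial m a))
          = a • fun i => lam i ^ m := by ext i; simp [mul_comm]
      rw [h1, Matrix.diagonal_smul]
      simp [Matrix.mul_smul, Matrix.smul_mul]

theorem stmt_13 (n d k : ℕ) (L U : Matrix (Fin n) (Fin n) ℝ) (lam : Fin n → ℝ)
    (hU : U * Uᵀ = 1) (hL : L = U * Matrix.diagonal lam * Uᵀ)
    (I : Finset (Fin n)) (X : Matrix (Fin n) (Fin d) ℝ)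
    (hspan : ∀ i : Fin n,
      (Uᵀ * X) i ∈ Submodule.span ℝ ((fun j : Fin n => (Uᵀ * X) j) '' ↑I))
    (g : Polynomial ℝ) (W : Matrix (Fin d) (Fin k) ℝ)
    (Z Ztil : Matrix (Fin n) (Fin k) ℝ)
    (hZ : Z = (Polynomial.aeval L) g * X * W) (hZtil : Ztil = Uᵀ * Z)
    (hgI : ∀ i ∈ I, g.eval (lam i) ≠ 0)
    (hrows : ∀ i ∈ I, ∃ c : ℝ, c ≠ 0 ∧ ∀ l, Ztil i l = c) :
    ∀ l₁ l₂ : Fin k, ∀ i, Ztil i l₁ = Ztil i l₂ := by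
  have hU' : Uᵀ * U = 1 := mul_eq_one_comm.mp hU
  set gl : Fin n → ℝ := fun i => g.eval (lam i) with hgl
  have hZt : Ztil = Matrix.diagonal gl * ((Uᵀ * X) * W) := by
    rw [hZtil, hZ, hL, aeval_conj_diag U lam hU g]
    simp only [← Matrix.mul_assoc]
    rw [hU', Matrix.one_mul]
  set φ : (Fin d → ℝ) →ₗ[ℝ] (Fin k → ℝ) := Matrix.vecMulLinear W with hφ
  have hentry : ∀ i l, Ztil i l = gl i * φ ((Uᵀ * X) i) l := by
    intro i l
    rw [hZt]
    simp [Matrix.mul_apply, Matrix.diagonal_apply, φ, Matrix.vecMulLinear_apply,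
      Matrix.vecMul, dotProduct]
  set S : Submodule ℝ (Fin k → ℝ) :=
    { carrier := {v | ∀ l₁ l₂ : Fin k, v l₁ = v l₂}
      add_mem' := fun ha hb l₁ l₂ => by simp [ha l₁ l₂, hb l₁ l₂]
      zero_mem' := fun _ _ => rfl
      smul_mem' := fun c v hv l₁ l₂ => by simp [hv l₁ l₂] } with hS
  have hbase : ∀ j ∈ I, φ ((Uᵀ * X) j) ∈ S := by
    intro j hj l₁ l₂
    obtain ⟨c, hc, hcl⟩ := hrows j hj
    have h1 := hentry j l₁
    have h2 := hentry j l₂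
    rw [hcl l₁] at h1
    rw [hcl l₂] at h2
    have := h1.symm.trans h2
    exact mul_left_cancel₀ (hgI j hj) this
  have hmem : ∀ i, φ ((Uᵀ * X) i) ∈ S := by
    intro i
    refine Submodule.span_induction (p := fun v _ => φ v ∈ S) ?_ ?_ ?_ ?_ (hspan i)
    · rintro v ⟨j, hj, rfl⟩
      exact hbase j hj
    · simp
    · intro a b _ _ ha hb
      rw [map_add]; exact S.add_mem ha hb
    · intro c a _ ha
      rw [_root_.map_smul]; exact S.smul_mem c ha
  intro l₁ l₂ i
  rw [hentry i l₁, hentry i l₂, hmem i l₁ l₂]
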